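/- For every i ∈ Fin n and every function f in the class C_N (i.e., f : Fin N → Bool such that either f or its pointwise complement takes the value true on exactly N/4 arguments with any two true-arguments at Hamming distance different from 1), f is balanced with respect to I_x^i: S_{I_x^i}(f) = 0. -/

import Mathlib

open Matrix BigOperators

/-- The sign `(-1)^{f j}` as a complex number. -/
noncomputable def signC (b : Bool) : ℂ := if b then -1 else 1

/-- `S_B(f) = ∑_{j,k} (-1)^{f j} (-1)^{f k} B_{jk}`. -/
noncomputable def Sval {N : ℕ} (B : Matrix (Fin N) (Fin N) ℂ) (f : Fin N → Bool) : ℂ :=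
  ∑ j, ∑ k, signC (f j) * signC (f k) * B j k

/-- The Hamming distance between two indices `l m : Fin (2^n)`, viewed as `n`-bit strings:
the number of bit positions at which they differ. -/
def hdist (n : ℕ) (l m : Fin (2 ^ n)) : ℕ :=
  (Finset.univ.filter fun i : Fin n => l.val.testBit i ≠ m.val.testBit i).card

/-- The spin operator `I_x^i`: entry `(l,m)` is `1/2` if the bit strings of `l` and `m`
differ exactly at bit `i` (and agree at all other bits), and `0` otherwise. -/
noncomputable def Ix (n : ℕ) (i : Fin n) : Matrix (Fin (2 ^ n)) (Fin (2 ^ n)) ℂ :=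
  Matrix.of fun l m =>
    if (l.val.testBit i ≠ m.val.testBit i)
        ∧ ∀ i' : Fin n, i' ≠ i → l.val.testBit i' = m.val.testBit i'
    then (1 / 2 : ℂ) else 0

/-- `g` takes the value true on exactly `N/4` arguments, any two of which are at
Hamming distance different from 1. -/
def goodFun (n : ℕ) (g : Fin (2 ^ n) → Bool) : Prop :=
  (Finset.univ.filter fun j : Fin (2 ^ n) => g j = true).card = 2 ^ n / 4 ∧
    ∀ j k : Fin (2 ^ n), g j = true → g k = true → j ≠ k → hdist n j k ≠ 1

/-- The class `C_N`: functions `f` such that `f` or its pointwise complement is good. -/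
def inCN (n : ℕ) (f : Fin (2 ^ n) → Bool) : Prop :=
  goodFun n f ∨ goodFun n (fun j => ! f j)

/-- Flip bit `i`. -/
def flipF (n : ℕ) (i : Fin n) (l : Fin (2 ^ n)) : Fin (2 ^ n) :=
  ⟨l.val ^^^ 2 ^ (i : ℕ),
    Nat.xor_lt_two_pow l.isLt (Nat.pow_lt_pow_right one_lt_two i.isLt)⟩

lemma testBit_flipF (n : ℕ) (i : Fin n) (l : Fin (2 ^ n)) (j : ℕ) :
    (flipF n i l).val.testBit j = ((l.val.testBit j) ^^ decide ((i : ℕ) = j)) := by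
  simp [flipF, Nat.testBit_xor, Nat.testBit_two_pow]

lemma flipF_invol (n : ℕ) (i : Fin n) : Function.Involutive (flipF n i) := by
  intro l
  simp [flipF, Nat.xor_assoc]

lemma flipF_ne (n : ℕ) (i : Fin n) (l : Fin (2 ^ n)) : flipF n i l ≠ l := by
  intro h
  have := congrArg (fun x : Fin (2^n) => x.val.testBit i) h
  simp [testBit_flipF] at this

lemma hdist_flipF (n : ℕ) (i : Fin n) (l : Fin (2 ^ n)) : hdist n l (flipF n i l) = 1 := by
  have : (Finset.univ.filter fun j : Fin n =>
      l.val.testBit j ≠ (flipF n i l).val.testBit j) = {i} := by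
    ext j
    simp only [Finset.mem_filter, Finset.mem_univ, true_and, Finset.mem_singleton,
      testBit_flipF]
    rcases eq_or_ne (j : ℕ) (i : ℕ) with h | h
    · have hj : j = i := Fin.ext h
      subst hj
      simp
    · simp [Ne.symm h, Fin.ext_iff, h]
  rw [hdist, this, Finset.card_singleton]

lemma Ix_apply (n : ℕ) (i : Fin n) (l m : Fin (2 ^ n)) :
    Ix n i l m = if m = flipF n i l then (1 / 2 : ℂ) else 0 := by
  rw [Ix, Matrix.of_apply]
  congr 1
  simp only [eq_iff_iff]
  constructor
  · rintro ⟨h1, h2⟩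
    apply Fin.ext
    apply Nat.eq_of_testBit_eq
    intro j
    rcases lt_or_ge j n with hj | hj
    · rw [testBit_flipF]
      rcases eq_or_ne ((i : ℕ)) j with h | h
      · subst h
        simp only [decide_true, Bool.xor_true]
        cases hl : l.val.testBit (i : ℕ) <;> cases hm : m.val.testBit (i : ℕ) <;>
          simp_all
      · have := h2 ⟨j, hj⟩ (by simpa [Fin.ext_iff] using Ne.symm h)
        simp [h, this]
    · have hm : m.val.testBit j = false :=
        Nat.testBit_lt_two_pow (lt_of_lt_of_le m.isLt (Nat.pow_le_pow_right (by norm_num) hj))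
      have hl : (flipF n i l).val.testBit j = false :=
        Nat.testBit_lt_two_pow (lt_of_lt_of_le (flipF n i l).isLt
          (Nat.pow_le_pow_right (by norm_num) hj))
      rw [hm, hl]
  · rintro rfl
    constructor
    · simp [testBit_flipF]
    · intro i' hi'
      rw [testBit_flipF]
      have : (i : ℕ) ≠ (i' : ℕ) := fun h => hi' (Fin.ext h.symm)
      simp [this]

lemma signC_mul_self (b : Bool) : signC b * signC b = 1 := by
  cases b <;> simp [signC]

lemma signC_not (b : Bool) : signC (!b) = - signC b := by
  cases b <;> simp [signC]

/-- Main counting lemma for a good function. -/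
lemma good_sum (n : ℕ) (hn : 2 ≤ n) (i : Fin n) (g : Fin (2 ^ n) → Bool)
    (hg : goodFun n g) :
    ∑ j : Fin (2 ^ n), signC (g j) * signC (g (flipF n i j)) = 0 := by
  obtain ⟨hcard, hdist1⟩ := hg
  have hdisj : ∀ j : Fin (2 ^ n), ¬ (g j = true ∧ g (flipF n i j) = true) := by
    rintro j ⟨h1, h2⟩
    exact hdist1 j (flipF n i j) h1 h2 (Ne.symm (flipF_ne n i j)) (hdist_flipF n i j)
  have key : ∀ j : Fin (2 ^ n), signC (g j) * signC (g (flipF n i j)) =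
      1 - 2 * (if g j = true then 1 else 0) - 2 * (if g (flipF n i j) = true then 1 else 0) := by
    intro j
    have := hdisj j
    cases h1 : g j <;> cases h2 : g (flipF n i j) <;> simp_all [signC] <;> norm_num
  rw [Finset.sum_congr rfl (fun j _ => key j)]
  rw [Finset.sum_sub_distrib, Finset.sum_sub_distrib]
  have e1 : ∑ _j : Fin (2 ^ n), (1 : ℂ) = (2 ^ n : ℕ) := by simp
  have e2 : ∑ j : Fin (2 ^ n), (2 : ℂ) * (if g j = true then 1 else 0)
      = 2 * ((Finset.univ.filter fun j : Fin (2 ^ n) => g j = true).card : ℂ) := by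
    rw [← Finset.mul_sum, Finset.sum_boole]
  have e3 : ∑ j : Fin (2 ^ n), (2 : ℂ) * (if g (flipF n i j) = true then 1 else 0)
      = ∑ j : Fin (2 ^ n), (2 : ℂ) * (if g j = true then 1 else 0) := by
    exact Equiv.sum_comp ((flipF_invol n i).toPerm) (fun j => (2:ℂ) * (if g j = true then 1 else 0))
  rw [e1, e3, e2, hcard]
  have h4 : 4 * (2 ^ n / 4) = 2 ^ n := by
    apply Nat.mul_div_cancel'
    have : (4 : ℕ) = 2 ^ 2 := by norm_num
    rw [this]
    exact pow_dvd_pow 2 hn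
  have hc : ((2 ^ n : ℕ) : ℂ) = 4 * ((2 ^ n / 4 : ℕ) : ℂ) := by
    exact_mod_cast h4.symm
  linear_combination hc


/-- Every function in the class `C_N` is balanced with respect to every `I_x^i`. -/
theorem CN_balanced_Ix (n : ℕ) (hn : 2 ≤ n) (i : Fin n)
    (f : Fin (2 ^ n) → Bool) (hf : inCN n f) :
    Sval (Ix n i) f = 0 := by
  have hred : Sval (Ix n i) f
      = (1 / 2 : ℂ) * ∑ j : Fin (2 ^ n), signC (f j) * signC (f (flipF n i j)) := by
    rw [Sval, Finset.mul_sum]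
    refine Finset.sum_congr rfl fun j _ => ?_
    rw [Finset.sum_congr rfl fun k _ => by rw [Ix_apply]]
    simp [mul_ite, Finset.sum_ite_eq' Finset.univ (flipF n i j)]
    ring
  rw [hred]
  rcases hf with hg | hg
  · rw [good_sum n hn i f hg]; ring
  · have : ∑ j : Fin (2 ^ n), signC (f j) * signC (f (flipF n i j))
        = ∑ j : Fin (2 ^ n), signC (!f j) * signC (!f (flipF n i j)) := by
      refine Finset.sum_congr rfl fun j _ => ?_
      rw [signC_not, signC_not]; ring
    rw [this, good_sum n hn i _ hg]; ring
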